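/- Let k be a field, A a finite-dimensional commutative unital k-algebra with basis (e_α)_{α∈ι}, and L a finite-dimensional Lie algebra over k with basis (f_i)_{i∈ι'} (ι, ι' finite). Let g^S be the matrix of the trace form τ_A of A in the basis (e_α), g the matrix of the Killing form κ_L of L in the basis (f_i), and g^E the matrix of the Killing form of the expanded Lie algebra A ⊗[k] L in the tensor-product basis (e_α ⊗ f_i). Then det(g^E) = det(g^S)^{dim L} · det(g)^{dim A}. -/

import Mathlib

open scoped TensorProduct

noncomputable instance expandedLieAlgebra (k A L : Type*) [Field k] [CommRing A] [Algebra k A]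
    [LieRing L] [LieAlgebra k L] : LieAlgebra k (A ⊗[k] L) where
  lie_smul c x y := by
    rw [← algebraMap_smul A c y, lie_smul, algebraMap_smul]

lemma toEnd_tmul (k A L : Type*) [Field k] [CommRing A] [Algebra k A]
    [LieRing L] [LieAlgebra k L] (a : A) (x : L) :
    LieModule.toEnd k (A ⊗[k] L) (A ⊗[k] L) (a ⊗ₜ x)
      = TensorProduct.map (LinearMap.mulLeft k a) (LieModule.toEnd k L L x) := by
  ext b y
  simp [LieModule.toEnd_apply_apply, LieAlgebra.ExtendScalars.bracket_tmul]

lemma killing_tmul (k A L : Type*) [Field k] [CommRing A] [Algebra k A]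
    [LieRing L] [LieAlgebra k L] [FiniteDimensional k A] [FiniteDimensional k L]
    (a b : A) (x y : L) :
    killingForm k (A ⊗[k] L) (a ⊗ₜ x) (b ⊗ₜ y)
      = Algebra.traceForm k A a b * killingForm k L x y := by
  rw [LieModule.traceForm_apply_apply, toEnd_tmul, toEnd_tmul,
    ← TensorProduct.map_comp, LinearMap.trace_tensorProduct',
    LieModule.traceForm_apply_apply, Algebra.traceForm_apply, ← LinearMap.mulLeft_mul]
  congr 2

theorem det_killingForm_expansion
    (k A L : Type*) (ι ι' : Type*) [Field k] [CommRing A] [Algebra k A]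
    [LieRing L] [LieAlgebra k L]
    [Fintype ι] [Fintype ι'] [DecidableEq ι] [DecidableEq ι']
    [FiniteDimensional k A] [FiniteDimensional k L]
    (bA : Module.Basis ι k A) (bL : Module.Basis ι' k L) :
    (LinearMap.toMatrix₂ (bA.tensorProduct bL) (bA.tensorProduct bL)
        (killingForm k (A ⊗[k] L))).det
      = (LinearMap.toMatrix₂ bA bA (Algebra.traceForm k A)).det ^ (Module.finrank k L) *
        (LinearMap.toMatrix₂ bL bL (killingForm k L)).det ^ (Module.finrank k A) := by
  have hm : LinearMap.toMatrix₂ (bA.tensorProduct bL) (bA.tensorProduct bL)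
      (killingForm k (A ⊗[k] L))
      = Matrix.kroneckerMap (· * ·) (LinearMap.toMatrix₂ bA bA (Algebra.traceForm k A))
        (LinearMap.toMatrix₂ bL bL (killingForm k L)) := by
    ext ⟨α, i⟩ ⟨β, j⟩
    rw [LinearMap.toMatrix₂_apply, Matrix.kroneckerMap_apply, LinearMap.toMatrix₂_apply,
      LinearMap.toMatrix₂_apply, Module.Basis.tensorProduct_apply, Module.Basis.tensorProduct_apply,
      killing_tmul]
  rw [hm, Matrix.det_kronecker, Module.finrank_eq_card_basis bA,
    Module.finrank_eq_card_basis bL]
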